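/- Let X be a regular topological space and κ an infinite cardinal such that every subspace of X is κ-Lindelöf, i.e., every open cover of any subspace of X has a subcover of cardinality at most κ. Then for every weakly discontinuous map f : X → Y into a topological space Y there exists a cover C of X by closed subsets with |C| ≤ κ such that the restriction f|C is continuous for every C ∈ C. -/

import Mathlib

open Set Topology

universe u v

/-- A map `f : X → Y` is *weakly discontinuous* if for every non-empty subset `A ⊆ X`
the set of discontinuity points of the restriction `f|A` is nowhere dense in the
subspace `A`. -/
def WeaklyDiscontinuous {X Y : Type*} [TopologicalSpace X] [TopologicalSpace Y]
    (f : X → Y) : Prop :=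
  ∀ A : Set X, A.Nonempty →
    IsNowhereDense {a : A | ¬ ContinuousWithinAt f A (a : X)}

variable {X : Type u} {Y : Type v} [TopologicalSpace X] [TopologicalSpace Y]

noncomputable def dstep (f : X → Y) (A : Set X) : Set X :=
  A ∩ closure {x | x ∈ A ∧ ¬ ContinuousWithinAt f A x}

noncomputable def Fseq (f : X → Y) (α : Ordinal.{u}) : Set X :=
  ⋂ β : {β : Ordinal.{u} // β < α}, dstep f (Fseq f β.1)
termination_by α
decreasing_by exact β.2

theorem mem_Fseq {f : X → Y} {α : Ordinal.{u}} {x : X} :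
    x ∈ Fseq f α ↔ ∀ β < α, x ∈ dstep f (Fseq f β) := by
  rw [Fseq]
  constructor
  · intro h β hβ
    exact mem_iInter.mp h ⟨β, hβ⟩
  · intro h
    exact mem_iInter.mpr fun β => h β.1 β.2

theorem dstep_subset (f : X → Y) (A : Set X) : dstep f A ⊆ A := inter_subset_left

theorem Fseq_anti {f : X → Y} {α γ : Ordinal.{u}} (h : α ≤ γ) : Fseq f γ ⊆ Fseq f α := by
  intro x hx
  exact mem_Fseq.mpr fun β hβ => mem_Fseq.mp hx β (hβ.trans_le h)

theorem Fseq_succ_subset {f : X → Y} {α : Ordinal.{u}} :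
    Fseq f (α + 1) ⊆ dstep f (Fseq f α) := by
  intro x hx
  exact mem_Fseq.mp hx α (by rw [Ordinal.add_one_eq_succ]; exact Order.lt_succ α)

theorem mem_Fseq_succ {f : X → Y} {α : Ordinal.{u}} {x : X}
    (h1 : x ∈ Fseq f α) (h2 : x ∈ dstep f (Fseq f α)) : x ∈ Fseq f (α + 1) := by
  refine mem_Fseq.mpr fun β hβ => ?_
  rcases lt_or_eq_of_le (by rwa [Ordinal.add_one_eq_succ, Order.lt_succ_iff] at hβ) with hβ' | rfl
  · have : β + 1 ≤ α := by rwa [Ordinal.add_one_eq_succ, Order.succ_le_iff]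
    exact Fseq_succ_subset (Fseq_anti this h1)
  · exact h2

theorem Fseq_closed (f : X → Y) (α : Ordinal.{u}) : IsClosed (Fseq f α) := by
  induction α using Ordinal.induction with
  | h α ih =>
    rw [Fseq]
    exact isClosed_iInter fun β => (ih β.1 β.2).inter isClosed_closure

theorem exists_cont_point {f : X → Y} (hwd : WeaklyDiscontinuous f) {A : Set X}
    (hA : A.Nonempty) : ∃ x ∈ A, x ∉ closure {x | x ∈ A ∧ ¬ ContinuousWithinAt f A x} := by
  by_contra h
  push_neg at h
  have hnd := hwd A hA
  have himg : (Subtype.val '' {a : A | ¬ ContinuousWithinAt f A (a : X)})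
      = {x | x ∈ A ∧ ¬ ContinuousWithinAt f A x} := by
    ext x
    simp only [mem_image, mem_setOf_eq]
    constructor
    · rintro ⟨a, ha, rfl⟩; exact ⟨a.2, ha⟩
    · rintro ⟨hxA, hx⟩; exact ⟨⟨x, hxA⟩, hx, rfl⟩
  have hcl : closure {a : A | ¬ ContinuousWithinAt f A (a : X)} = univ := by
    ext a
    simp only [mem_univ, iff_true]
    rw [closure_subtype, himg]
    exact h a a.2
  obtain ⟨x, hx⟩ := hA
  have : (⟨x, hx⟩ : A) ∈ interior (closure {a : A | ¬ ContinuousWithinAt f A (a : X)}) := by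
    rw [hcl, interior_univ]; trivial
  rw [hnd] at this
  exact this

theorem exists_exit {f : X → Y} {δ : Ordinal.{u}} (hδ : Fseq f δ = ∅) (x : X) :
    ∃ β < δ, x ∈ Fseq f β ∧ x ∉ Fseq f (β + 1) := by
  have hS : x ∉ Fseq f δ := by rw [hδ]; exact notMem_empty x
  obtain ⟨α, hαS, hmin⟩ := Ordinal.lt_wf.has_min {α : Ordinal.{u} | x ∉ Fseq f α} ⟨δ, hS⟩
  have hαδ : α ≤ δ := not_lt.mp (hmin δ hS)
  rcases Ordinal.zero_or_succ_or_isSuccLimit α with rfl | ⟨β, rfl⟩ | hlim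
  · exact absurd (mem_Fseq.mpr fun β hβ => absurd hβ (not_lt_of_ge (zero_le (a := β)))) hαS
  · refine ⟨β, lt_of_lt_of_le (Order.lt_succ β) hαδ, ?_, ?_⟩
    · by_contra hb
      exact hmin β hb (Order.lt_succ β)
    · rwa [Ordinal.add_one_eq_succ]
  · refine absurd (mem_Fseq.mpr fun β hβ => ?_) hαS
    have hβ1 : β + 1 < α := by rw [Ordinal.add_one_eq_succ]; exact hlim.succ_lt hβ
    have : x ∈ Fseq f (β + 1) := by
      by_contra hb
      exact hmin _ hb hβ1
    exact Fseq_succ_subset this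

theorem exists_empty (κ : Cardinal.{u}) (hκ : Cardinal.aleph0 ≤ κ)
    (hl : ∀ A : Set X, ∀ U : Set (Set X), (∀ u ∈ U, IsOpen u) → A ⊆ ⋃₀ U →
      ∃ V ⊆ U, Cardinal.mk V ≤ κ ∧ A ⊆ ⋃₀ V)
    {f : X → Y} (hwd : WeaklyDiscontinuous f) :
    ∃ δ, δ < (Order.succ κ).ord ∧ Fseq f δ = ∅ := by
  by_contra h
  push_neg at h
  set O := (Order.succ κ).ord with hO
  have hOlim : Order.IsSuccLimit O := Cardinal.isSuccLimit_ord (hκ.trans (Order.le_succ κ))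
  have hnon : ∀ α : Iio O, ∃ x, x ∈ Fseq f α.1 ∧ x ∉ Fseq f (α.1 + 1) := by
    rintro ⟨α, hα⟩
    obtain ⟨x, hx1, hx2⟩ := exists_cont_point hwd (h α hα)
    exact ⟨x, hx1, fun hmem => hx2 (Fseq_succ_subset hmem).2⟩
  choose x hx1 hx2 using hnon
  obtain ⟨V, hVU, hVκ, hAV⟩ := hl (range x) (range fun α : Iio O => (Fseq f (α.1 + 1))ᶜ)
    (by rintro u ⟨α, rfl⟩; exact (Fseq_closed f _).isOpen_compl)
    (by rintro _ ⟨α, rfl⟩; exact ⟨_, ⟨α, rfl⟩, hx2 α⟩)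
  choose g hg using fun v : V => hVU v.2
  have hγ : (⨆ v : V, (g v).1 + 1) < O := by
    apply Ordinal.iSup_lt_ord
    · rw [hO, (Cardinal.isRegular_succ hκ).cof_eq]
      exact lt_of_le_of_lt hVκ (Order.lt_succ κ)
    · intro v
      rw [Ordinal.add_one_eq_succ]
      exact hOlim.succ_lt (g v).2
  obtain ⟨v, hvV, hxv⟩ := hAV (mem_range_self (⟨_, hγ⟩ : Iio O))
  have hle : (g ⟨v, hvV⟩).1 + 1 ≤ ⨆ v : V, (g v).1 + 1 :=
    Ordinal.le_iSup (fun v : V => (g v).1 + 1) ⟨v, hvV⟩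
  have hxF := Fseq_anti hle (hx1 ⟨_, hγ⟩)
  have hgv : (Fseq f ((g ⟨v, hvV⟩).1 + 1))ᶜ = v := hg ⟨v, hvV⟩
  rw [← hgv] at hxv
  exact hxv hxF

theorem pieces [RegularSpace X] (κ : Cardinal.{u})
    (hl : ∀ A : Set X, ∀ U : Set (Set X), (∀ u ∈ U, IsOpen u) → A ⊆ ⋃₀ U →
      ∃ V ⊆ U, Cardinal.mk V ≤ κ ∧ A ⊆ ⋃₀ V)
    (F W : Set X) (hF : IsClosed F) (hW : IsOpen W) :
    ∃ P : Set (Set X), Cardinal.mk P ≤ κ ∧ (∀ K ∈ P, IsClosed K ∧ K ⊆ F ∩ W) ∧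
      F ∩ W ⊆ ⋃₀ P := by
  have h : ∀ z : ↥(F ∩ W), ∃ K : Set X, K ∈ 𝓝 (z : X) ∧ IsClosed K ∧ K ⊆ W :=
    fun z => exists_mem_nhds_isClosed_subset (hW.mem_nhds z.2.2)
  choose K hK1 hK2 hK3 using h
  obtain ⟨V, hVU, hVκ, hcov⟩ := hl (F ∩ W) (range fun z => interior (K z))
    (by rintro u ⟨z, rfl⟩; exact isOpen_interior)
    (fun y hy => ⟨interior (K ⟨y, hy⟩), ⟨⟨y, hy⟩, rfl⟩,
      mem_interior_iff_mem_nhds.mpr (hK1 ⟨y, hy⟩)⟩)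
  choose φ hφ using fun v : V => hVU v.2
  refine ⟨range (fun v : V => K (φ v) ∩ F), le_trans Cardinal.mk_range_le hVκ, ?_, ?_⟩
  · rintro _ ⟨v, rfl⟩
    exact ⟨(hK2 (φ v)).inter hF, fun y hy => ⟨hy.2, hK3 (φ v) hy.1⟩⟩
  · intro y hy
    obtain ⟨v, hvV, hyv⟩ := hcov hy
    refine ⟨K (φ ⟨v, hvV⟩) ∩ F, ⟨⟨v, hvV⟩, rfl⟩, ?_, hy.1⟩
    have hφv : interior (K (φ ⟨v, hvV⟩)) = v := hφ ⟨v, hvV⟩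
    rw [← hφv] at hyv
    exact interior_subset hyv
theorem dec_le_of_hereditarily_kappa_Lindelof
    {X : Type u} {Y : Type v} [TopologicalSpace X] [TopologicalSpace Y]
    [RegularSpace X]
    (κ : Cardinal.{u}) (hκ : Cardinal.aleph0 ≤ κ)
    -- every subspace of `X` is κ-Lindelöf
    (hl : ∀ A : Set X, ∀ U : Set (Set X), (∀ u ∈ U, IsOpen u) → A ⊆ ⋃₀ U →
      ∃ V ⊆ U, Cardinal.mk V ≤ κ ∧ A ⊆ ⋃₀ V)
    (f : X → Y) (hwd : WeaklyDiscontinuous f) :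
    ∃ C : Set (Set X), Cardinal.mk C ≤ κ ∧ (∀ c ∈ C, IsClosed c) ∧ ⋃₀ C = Set.univ ∧
      ∀ c ∈ C, ContinuousOn f c := by
  obtain ⟨δ, hδO, hδ⟩ := exists_empty κ hκ hl hwd
  have hP : ∀ β : Ordinal.{u}, ∃ P : Set (Set X), Cardinal.mk P ≤ κ ∧
      (∀ K ∈ P, IsClosed K ∧ K ⊆ Fseq f β ∩
        (closure {x | x ∈ Fseq f β ∧ ¬ ContinuousWithinAt f (Fseq f β) x})ᶜ) ∧
      Fseq f β ∩ (closure {x | x ∈ Fseq f β ∧ ¬ ContinuousWithinAt f (Fseq f β) x})ᶜ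
        ⊆ ⋃₀ P :=
    fun β => pieces κ hl _ _ (Fseq_closed f β) isClosed_closure.isOpen_compl
  choose P hPκ hPprop hPcov using hP
  have hcont : ∀ β, ∀ K ∈ P β, ContinuousOn f K := by
    intro β K hK y hy
    have hsub := (hPprop β K hK).2
    have hyF : y ∈ Fseq f β := (hsub hy).1
    have hycl : y ∉ closure {x | x ∈ Fseq f β ∧ ¬ ContinuousWithinAt f (Fseq f β) x} :=
      (hsub hy).2
    have hcw : ContinuousWithinAt f (Fseq f β) y := by
      by_contra hc
      exact hycl (subset_closure ⟨hyF, hc⟩)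
    exact (hcw.mono (fun z hz => (hsub hz).1))
  refine ⟨⋃ i : δ.ToType, P (((Ordinal.ToType.mk (o := δ))).symm i).1, ?_, ?_, ?_, ?_⟩
  · calc Cardinal.mk ↥(⋃ i : δ.ToType, P (((Ordinal.ToType.mk (o := δ))).symm i).1)
        ≤ Cardinal.sum (fun i : δ.ToType =>
            Cardinal.mk ↥(P (((Ordinal.ToType.mk (o := δ))).symm i).1)) :=
          Cardinal.mk_iUnion_le_sum_mk
      _ ≤ Cardinal.sum (fun _ : δ.ToType => κ) :=
          Cardinal.sum_le_sum _ _ (fun i => hPκ _)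
      _ = Cardinal.mk δ.ToType * κ := Cardinal.sum_const' _ _
      _ = δ.card * κ := by rw [Cardinal.mk_toType]
      _ ≤ κ * κ := by
          apply mul_le_mul_left
          have := Cardinal.lt_ord.mp hδO
          exact Order.lt_succ_iff.mp this
      _ = κ := Cardinal.mul_eq_self hκ
  · intro c hc
    obtain ⟨i, hi⟩ := mem_iUnion.mp hc
    exact (hPprop _ c hi).1
  · apply eq_univ_of_forall
    intro x
    obtain ⟨β, hβδ, hx1, hx2⟩ := exists_exit hδ x
    have hxW : x ∉ closure {z | z ∈ Fseq f β ∧ ¬ ContinuousWithinAt f (Fseq f β) z} := by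
      intro hmem
      exact hx2 (mem_Fseq_succ hx1 ⟨hx1, hmem⟩)
    obtain ⟨K, hKP, hxK⟩ := hPcov β ⟨hx1, hxW⟩
    refine ⟨K, mem_iUnion.mpr ⟨(Ordinal.ToType.mk (o := δ)) ⟨β, hβδ⟩, ?_⟩, hxK⟩
    rw [OrderIso.symm_apply_apply]
    exact hKP
  · intro c hc
    obtain ⟨i, hi⟩ := mem_iUnion.mp hc
    exact hcont _ c hi
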